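/- Let σ, σ̃ be distinct letters from AP \ {wht, shdw}, and let w be a shadowy word in which only even (white) positions may contain σ and only odd (shadow) positions may contain σ̃. Then the following are equivalent: (i) for every even position p with p+1 < |w|: σ ∈ w_p iff σ̃ ∈ w_{p+1}; (ii) for every even position p of w, |{j < p : wht ∈ w_j and σ ∈ w_j}| = |{j < p : shdw ∈ w_j and σ̃ ∈ w_j}|, and moreover for the last even position p = |w|−2 it holds that σ ∈ w_p iff σ̃ ∈ w_{p+1}. -/
import Mathlib


/- STATEMENT 8: Characterisation of the transfer condition on shadowy words
(the (♥)/(♦) claim of Exercise 2). -/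

namespace Transfer8

abbrev Word := List (Set ℕ)

/-- A word is shadowy: even length, even positions carry `wht` and not `shdw`,
odd positions carry `shdw` and not `wht`. -/
def Shadowy (wht shdw : ℕ) (w : Word) : Prop :=
  Even w.length ∧
  (∀ j < w.length, Even j → wht ∈ w.getD j ∅ ∧ shdw ∉ w.getD j ∅) ∧
  (∀ j < w.length, Odd j → shdw ∈ w.getD j ∅ ∧ wht ∉ w.getD j ∅)

private lemma step (P : ℕ → Prop) [DecidablePred P] (p : ℕ) :
    ((Finset.range (p+2)).filter P).card =
      ((Finset.range p).filter P).card
        + (if P p then 1 else 0) + (if P (p+1) then 1 else 0) := by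
  rw [Finset.card_filter, show p + 2 = (p+1)+1 from rfl, Finset.sum_range_succ,
      Finset.sum_range_succ, ← Finset.card_filter]

theorem transfer_characterisation
    (wht shdw σ σt : ℕ)
    (hws : wht ≠ shdw) (hσσt : σ ≠ σt)
    (hσw : σ ≠ wht) (hσs : σ ≠ shdw) (hσtw : σt ≠ wht) (hσts : σt ≠ shdw)
    (w : Word) (hw : w ≠ []) (hsh : Shadowy wht shdw w)
    (honlyσ : ∀ j < w.length, σ ∈ w.getD j ∅ → Even j)
    (honlyσt : ∀ j < w.length, σt ∈ w.getD j ∅ → Odd j) :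
    -- (i)  every even position transfers σ to σ̃ at its successor
    (∀ p, Even p → p + 1 < w.length →
        (σ ∈ w.getD p ∅ ↔ σt ∈ w.getD (p + 1) ∅)) ↔
    -- (ii) the equicardinality (♥) at every even position, together with (♦)
    ((∀ p, Even p → p < w.length →
        Set.ncard {j | j < p ∧ wht ∈ w.getD j ∅ ∧ σ ∈ w.getD j ∅} =
        Set.ncard {j | j < p ∧ shdw ∈ w.getD j ∅ ∧ σt ∈ w.getD j ∅}) ∧
      (2 ≤ w.length →
        (σ ∈ w.getD (w.length - 2) ∅ ↔ σt ∈ w.getD (w.length - 1) ∅))) := by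
  classical
  obtain ⟨hev, hwhite, hshadow⟩ := hsh
  have hA : ∀ p, Set.ncard {j | j < p ∧ wht ∈ w.getD j ∅ ∧ σ ∈ w.getD j ∅} =
      ((Finset.range p).filter (fun j => wht ∈ w.getD j ∅ ∧ σ ∈ w.getD j ∅)).card := by
    intro p; rw [← Set.ncard_coe_finset]; congr 1; ext j; simp
  have hB : ∀ p, Set.ncard {j | j < p ∧ shdw ∈ w.getD j ∅ ∧ σt ∈ w.getD j ∅} =
      ((Finset.range p).filter (fun j => shdw ∈ w.getD j ∅ ∧ σt ∈ w.getD j ∅)).card := by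
    intro p; rw [← Set.ncard_coe_finset]; congr 1; ext j; simp
  have hstepP : ∀ p, Even p → p + 1 < w.length →
      ((Finset.range (p+2)).filter (fun j => wht ∈ w.getD j ∅ ∧ σ ∈ w.getD j ∅)).card =
        ((Finset.range p).filter (fun j => wht ∈ w.getD j ∅ ∧ σ ∈ w.getD j ∅)).card
          + (if σ ∈ w.getD p ∅ then 1 else 0) := by
    intro p hp hlt
    rw [step]
    have h1 : (wht ∈ w.getD p ∅ ∧ σ ∈ w.getD p ∅) ↔ σ ∈ w.getD p ∅ :=
      ⟨fun h => h.2, fun h => ⟨(hwhite p (by omega) hp).1, h⟩⟩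
    have h2 : ¬ (wht ∈ w.getD (p+1) ∅ ∧ σ ∈ w.getD (p+1) ∅) :=
      fun h => (hshadow (p+1) hlt (Even.add_one hp)).2 h.1
    rw [if_congr h1 rfl rfl, if_neg h2, add_zero]
  have hstepQ : ∀ p, Even p → p + 1 < w.length →
      ((Finset.range (p+2)).filter (fun j => shdw ∈ w.getD j ∅ ∧ σt ∈ w.getD j ∅)).card =
        ((Finset.range p).filter (fun j => shdw ∈ w.getD j ∅ ∧ σt ∈ w.getD j ∅)).card
          + (if σt ∈ w.getD (p+1) ∅ then 1 else 0) := by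
    intro p hp hlt
    rw [step]
    have h1 : ¬ (shdw ∈ w.getD p ∅ ∧ σt ∈ w.getD p ∅) :=
      fun h => (hwhite p (by omega) hp).2 h.1
    have h2 : (shdw ∈ w.getD (p+1) ∅ ∧ σt ∈ w.getD (p+1) ∅) ↔ σt ∈ w.getD (p+1) ∅ :=
      ⟨fun h => h.2, fun h => ⟨(hshadow (p+1) hlt (Even.add_one hp)).1, h⟩⟩
    rw [if_congr h2 rfl rfl, if_neg h1, add_zero]
  constructor
  · intro htr
    refine ⟨?_, ?_⟩
    · have main : ∀ k, 2*k ≤ w.length →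
          ((Finset.range (2*k)).filter (fun j => wht ∈ w.getD j ∅ ∧ σ ∈ w.getD j ∅)).card =
          ((Finset.range (2*k)).filter (fun j => shdw ∈ w.getD j ∅ ∧ σt ∈ w.getD j ∅)).card := by
        intro k
        induction k with
        | zero => simp
        | succ k ih =>
          intro h
          have hlt : 2*k + 1 < w.length := by omega
          have hek : Even (2*k) := even_two_mul k
          rw [show 2*(k+1) = 2*k + 2 by ring, hstepP _ hek hlt, hstepQ _ hek hlt,
            ih (by omega)]
          have := htr (2*k) hek hlt
          rw [if_congr this rfl rfl]
      intro p hp hlt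
      obtain ⟨k, hk⟩ := hp
      rw [hA, hB]
      have : p = 2*k := by omega
      subst this
      exact main k (by omega)
    · intro hlen
      have h2 : ¬ Odd w.length := by simp [Nat.not_odd_iff_even.mpr hev]
      have hevlen : Even w.length := hev
      have hp : Even (w.length - 2) := by
        obtain ⟨m, hm⟩ := hevlen
        exact ⟨m - 1, by omega⟩
      have h1 : w.length - 2 + 1 = w.length - 1 := by omega
      have := htr (w.length - 2) hp (by omega)
      rwa [h1] at this
  · rintro ⟨hcount, hlast⟩ p hp hlt
    by_cases hend : p + 2 = w.length
    · have h1 : w.length - 2 = p := by omega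
      have h2 : w.length - 1 = p + 1 := by omega
      have := hlast (by omega)
      rwa [h1, h2] at this
    · have hlt2 : p + 2 < w.length := by
        rcases hev with ⟨m, hm⟩
        rcases hp with ⟨k, hk⟩
        omega
      have hpe : Even p := hp
      have e1 := hcount p hp (by omega)
      have e2 := hcount (p+2) (by rcases hp with ⟨k,hk⟩; exact ⟨k+1, by omega⟩) hlt2
      rw [hA, hB] at e1 e2
      rw [hstepP p hpe hlt, hstepQ p hpe hlt, e1] at e2
      have e3 : (if σ ∈ w.getD p ∅ then 1 else 0) =
          (if σt ∈ w.getD (p+1) ∅ then 1 else 0) := by omega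
      constructor
      · intro h
        by_contra hc
        rw [if_pos h, if_neg hc] at e3
        exact one_ne_zero e3
      · intro h
        by_contra hc
        rw [if_neg hc, if_pos h] at e3
        exact one_ne_zero e3.symm

end Transfer8
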